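/- Bregman iteration applied to an eigenfunction recovers it in finitely many steps: if λf ∈ ∂R(f) for a convex one-homogeneous functional R with λ < λ', then the Bregman iterates u^{k+1} = argmin_u (λ'/2)‖u−f‖² + R(u) − ⟨p^k, u⟩ with p^0 = 0, p^k ∈ ∂R(u^k), satisfy u^k = f for all k ≥ ⌈λ'/(λ'−λ)⌉ (exact reconstruction after finitely many iterations). -/

import Mathlib

open scoped RealInnerProductSpace

set_option maxHeartbeats 1000000

/-- Bregman iteration recovers an eigenfunction exactly after
finitely many steps: if `λ f ∈ ∂J(f)` with `0 < λ < λ'` for a convex,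
nonnegative, positively one-homogeneous `J`, and `u (k+1)` minimizes the
Bregman objective `(λ'/2)‖·-f‖² + J - ⟪p k, ·⟫` with `p 0 = 0` and
`p (k+1) = p k + λ'(f - u (k + 1))`, then `u k = f` for all
`k ≥ ⌈λ'/(λ'-λ)⌉`. -/
theorem bregman_finite_exact_recovery {H : Type*} [NormedAddCommGroup H]
    [InnerProductSpace ℝ H]
    (J : H → ℝ) (hJconv : ConvexOn ℝ Set.univ J)
    (hJhom : ∀ (c : ℝ), 0 ≤ c → ∀ u : H, J (c • u) = c * J u)
    (hJnonneg : ∀ u : H, 0 ≤ J u)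
    (f : H) (lam lam' : ℝ) (hlam : 0 < lam) (hll : lam < lam')
    (hEig : ∀ w : H, J f + ⟪lam • f, w - f⟫ ≤ J w)
    (u p : ℕ → H) (hu0 : u 0 = 0) (hp0 : p 0 = 0)
    (hpupd : ∀ k : ℕ, p (k + 1) = p k + lam' • (f - u (k + 1)))
    (hmin : ∀ k : ℕ, ∀ w : H,
      lam' / 2 * ‖u (k + 1) - f‖ ^ 2 + J (u (k + 1)) - ⟪p k, u (k + 1)⟫
        ≤ lam' / 2 * ‖w - f‖ ^ 2 + J w - ⟪p k, w⟫) :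
    ∀ k : ℕ, (⌈lam' / (lam' - lam)⌉ : ℤ) ≤ (k : ℤ) → u k = f := by
  have hlam'pos : 0 < lam' := hlam.trans hll
  have hlamne : lam' ≠ 0 := ne_of_gt hlam'pos
  have hJ0 : J 0 = 0 := by
    have := hJhom 0 le_rfl 0
    simpa using this
  have hinner : ∀ w : H, ⟪lam • f, w - f⟫ = lam * ⟪f, w⟫ - lam * ‖f‖ ^ 2 := by
    intro w
    rw [real_inner_smul_left, inner_sub_right, real_inner_self_eq_norm_sq]
    ring
  have hJf_le : J f ≤ lam * ‖f‖ ^ 2 := by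
    have h := hEig 0
    rw [hJ0, hinner 0] at h
    simp at h
    linarith
  have hJf_ge : lam * ‖f‖ ^ 2 ≤ J f := by
    have h := hEig ((2 : ℝ) • f)
    rw [hJhom 2 (by norm_num) f, hinner ((2 : ℝ) • f), real_inner_smul_right,
      real_inner_self_eq_norm_sq] at h
    linarith
  have hJf : J f = lam * ‖f‖ ^ 2 := le_antisymm hJf_le hJf_ge
  have hstar : ∀ w : H, lam * ⟪f, w⟫ ≤ J w := by
    intro w
    have h := hEig w
    rw [hinner w, hJf] at h
    linarith
  set c : ℝ := 1 - lam / lam' with hc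
  have hcnonneg : 0 ≤ c := by
    rw [hc]
    have : lam / lam' ≤ 1 := (div_le_one hlam'pos).mpr (le_of_lt hll)
    linarith
  set v : H := c • f with hv
  set C : ℝ := lam * ‖f‖ ^ 2 - lam ^ 2 / (2 * lam') * ‖f‖ ^ 2 with hC
  -- key quadratic identity
  have hid : ∀ w : H, lam' / 2 * ‖w - f‖ ^ 2 + lam * ⟪f, w⟫
      = lam' / 2 * ‖w - v‖ ^ 2 + C := by
    intro w
    have e1 : ‖w - f‖ ^ 2 = ‖w‖ ^ 2 - 2 * ⟪w, f⟫ + ‖f‖ ^ 2 := norm_sub_sq_real w f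
    have e2 : ‖w - v‖ ^ 2 = ‖w‖ ^ 2 - 2 * (c * ⟪w, f⟫) + c ^ 2 * ‖f‖ ^ 2 := by
      rw [norm_sub_sq_real, hv, real_inner_smul_right, norm_smul, mul_pow,
        Real.norm_eq_abs, sq_abs]
    have e3 : ⟪f, w⟫ = ⟪w, f⟫ := real_inner_comm w f
    rw [e1, e2, e3, hC, hc]
    field_simp
    ring
  have hfv : ⟪f, v⟫ = c * ‖f‖ ^ 2 := by
    rw [hv, real_inner_smul_right, real_inner_self_eq_norm_sq]
  have hJv : J v = lam * ⟪f, v⟫ := by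
    rw [hv, hJhom c hcnonneg f, hJf, hfv]
    ring
  -- value of the objective at v is C
  have hGv : lam' / 2 * ‖v - f‖ ^ 2 + J v = C := by
    have := hid v
    simp at this
    rw [hJv]
    linarith
  -- u 1 = v
  have hu1 : u 1 = v := by
    have hmv := hmin 0 v
    rw [hp0] at hmv
    simp only [inner_zero_left, sub_zero] at hmv
    have h1 : lam' / 2 * ‖u 1 - f‖ ^ 2 + J (u 1) ≤ C := by
      rw [← hGv]; exact hmv
    have h2 : lam' / 2 * ‖u 1 - v‖ ^ 2 + C ≤ lam' / 2 * ‖u 1 - f‖ ^ 2 + J (u 1) := by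
      have := hid (u 1)
      have hs := hstar (u 1)
      linarith
    have h3 : lam' / 2 * ‖u 1 - v‖ ^ 2 ≤ 0 := by linarith
    have h4 : ‖u 1 - v‖ ^ 2 = 0 :=
      le_antisymm (le_of_mul_le_mul_left (by linarith) (by linarith : (0:ℝ) < lam' / 2))
        (sq_nonneg _)
    have h5 : ‖u 1 - v‖ = 0 := (pow_eq_zero_iff (by norm_num : (2:ℕ) ≠ 0)).mp h4
    have := norm_eq_zero.mp h5
    exact sub_eq_zero.mp this
  -- p 1 = lam • f
  have hp1 : p 1 = lam • f := by
    rw [hpupd 0, hp0, hu1, hv, zero_add]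
    rw [smul_sub, smul_smul, ← sub_smul]
    congr 1
    rw [hc]
    field_simp
    ring
  -- fixed point step
  have hfix : ∀ k : ℕ, p k = lam • f → u (k + 1) = f ∧ p (k + 1) = lam • f := by
    intro k hpk
    have hmf := hmin k f
    rw [hpk] at hmf
    have hff : ⟪lam • f, f⟫ = lam * ‖f‖ ^ 2 := by
      rw [real_inner_smul_left, real_inner_self_eq_norm_sq]
    have hfu : ⟪lam • f, u (k + 1)⟫ = lam * ⟪f, u (k + 1)⟫ := real_inner_smul_left f (u (k+1)) lam
    rw [hff, hfu, hJf] at hmf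
    simp only [sub_self, norm_zero] at hmf
    have hs := hstar (u (k + 1))
    have h3 : lam' / 2 * ‖u (k + 1) - f‖ ^ 2 ≤ 0 := by
      have h0 : (0:ℝ) ^ 2 = 0 := by norm_num
      rw [h0] at hmf
      linarith
    have h4 : ‖u (k + 1) - f‖ ^ 2 = 0 :=
      le_antisymm (le_of_mul_le_mul_left (by linarith) (by linarith : (0:ℝ) < lam' / 2))
        (sq_nonneg _)
    have h5 : ‖u (k + 1) - f‖ = 0 := (pow_eq_zero_iff (by norm_num : (2:ℕ) ≠ 0)).mp h4
    have huf : u (k + 1) = f := sub_eq_zero.mp (norm_eq_zero.mp h5)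
    refine ⟨huf, ?_⟩
    rw [hpupd k, huf, sub_self, smul_zero, add_zero, hpk]
  have hpall : ∀ n : ℕ, p (n + 1) = lam • f := by
    intro n
    induction n with
    | zero => exact hp1
    | succ m ih => exact (hfix (m + 1) ih).2
  have huall : ∀ n : ℕ, u (n + 2) = f := fun n => (hfix (n + 1) (hpall n)).1
  intro k hk
  have hgt1 : (1 : ℝ) < lam' / (lam' - lam) := by
    rw [lt_div_iff₀ (by linarith)]
    linarith
  have h2le : (2 : ℤ) ≤ ⌈lam' / (lam' - lam)⌉ := by
    have := Int.lt_ceil.mpr (show ((1:ℤ):ℝ) < lam' / (lam' - lam) by exact_mod_cast hgt1)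
    omega
  have hk2 : 2 ≤ k := by exact_mod_cast h2le.trans hk
  obtain ⟨n, rfl⟩ : ∃ n, k = n + 2 := ⟨k - 2, by omega⟩
  exact huall n
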